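/- For every ε > 0 and every integer j ≥ 0: the sequence (ρ_n^{(2j)})_{n≥0} converges to 1/(j+1) as n → ∞, and the sequence (2ε(n+1)·ρ_n^{(2j+1)})_{n≥0} converges to j+1 as n → ∞ (equivalently, b_n^{(2j+1)} → (j+1)/2 as n → ∞). -/

import Mathlib

/-- The map `T` acting on sequences: `T(u)₀ = ε/(1+u₁)`,
`T(u)ₙ = ε(n+1)/(1 + u_{n-1} + u_{n+1})` for `n ≥ 1`. -/
noncomputable def Tmap (ε : ℝ) (u : ℕ → ℝ) : ℕ → ℝ
  | 0 => ε / (1 + u 1)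
  | (n+1) => ε * ((n : ℝ) + 2) / (1 + u n + u (n+2))

/-- Shifted bound sequences: `bnd ε k = b^{(k-1)}`, i.e. `bnd ε 0 = b^{(-1)} = 0`
and `bnd ε (k+1) = T (bnd ε k)`, so that `b^{(k)} = bnd ε (k+1)` for `k ≥ -1`. -/
noncomputable def bnd (ε : ℝ) : ℕ → ℕ → ℝ
  | 0 => fun _ => 0
  | (k+1) => Tmap ε (bnd ε k)

/-- Shifted rescaled bounds: `rho ε k n = ρ_n^{(k-1)} = b_n^{(k-1)}/(ε(n+1))`. -/
noncomputable def rho (ε : ℝ) (k n : ℕ) : ℝ := bnd ε k n / (ε * ((n : ℝ) + 1))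

/-- The differences `Δd ε k n = Δ_n^{(k)} = (-1)^k (ρ_n^{(k)} - ρ_n^{(k-1)})` for `k ≥ 0`. -/
noncomputable def Δd (ε : ℝ) (k n : ℕ) : ℝ := (-1 : ℝ)^k * (rho ε (k+1) n - rho ε k n)

open Filter

lemma bnd_nonneg (ε : ℝ) (hε : 0 < ε) : ∀ k n, 0 ≤ bnd ε k n := by
  intro k
  induction k with
  | zero => intro n; simp [bnd]
  | succ k ih =>
    intro n
    cases n with
    | zero =>
      have h1 := ih 1
      simp only [bnd, Tmap]
      positivity
    | succ m =>
      have h1 := ih m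
      have h2 := ih (m+2)
      simp only [bnd, Tmap]
      positivity

lemma bnd_succ_succ (ε : ℝ) (k n : ℕ) :
    bnd ε (k+1) (n+1) = ε * ((n : ℝ) + 2) / (1 + bnd ε k n + bnd ε k (n+2)) := rfl

lemma aux0 (c : ℝ) (hc : 0 < c) :
    Tendsto (fun n : ℕ => 1 / (c * ((n : ℝ) + 2))) atTop (nhds 0) := by
  simp only [one_div]
  apply Filter.Tendsto.comp tendsto_inv_atTop_zero
  apply Filter.Tendsto.const_mul_atTop hc
  exact tendsto_atTop_add_const_right atTop 2 tendsto_natCast_atTop_atTop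

lemma ratio (a : ℝ) :
    Tendsto (fun n : ℕ => ((n : ℝ) + a) / ((n : ℝ) + 2)) atTop (nhds 1) := by
  have h : ∀ n : ℕ, ((n : ℝ) + a) / ((n : ℝ) + 2) = 1 + (a - 2) * (1 / (1 * ((n : ℝ) + 2))) := by
    intro n
    have hn : ((n : ℝ) + 2) ≠ 0 := by positivity
    field_simp
    ring
  simp only [h]
  have := (aux0 1 one_pos).const_mul (a - 2)
  have hc : Filter.Tendsto (fun _ : ℕ => (1:ℝ)) atTop (nhds 1) := tendsto_const_nhds
  have h2 := hc.add this
  simpa using h2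

lemma lemA (ε L : ℝ) (hε : 0 < ε) (hL : 0 < L) (k : ℕ)
    (h : Tendsto (fun n => rho ε k n) atTop (nhds L)) :
    Tendsto (fun n => bnd ε (k+1) n) atTop (nhds (1 / (2*L))) := by
  rw [← Filter.tendsto_add_atTop_iff_nat 1]
  have hpos : ∀ n : ℕ, 0 < 1 + bnd ε k n + bnd ε k (n+2) := by
    intro n
    have h1 := bnd_nonneg ε hε k n
    have h2 := bnd_nonneg ε hε k (n+2)
    linarith
  have key : ∀ n : ℕ, bnd ε (k+1) (n+1) =
      ((1 + bnd ε k n + bnd ε k (n+2)) / (ε * ((n : ℝ) + 2)))⁻¹ := by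
    intro n
    rw [bnd_succ_succ, inv_div]
  have hid : ∀ n : ℕ, (1 + bnd ε k n + bnd ε k (n+2)) / (ε * ((n : ℝ) + 2)) =
      1 / (ε * ((n : ℝ) + 2)) + rho ε k n * (((n : ℝ) + 1) / ((n : ℝ) + 2))
        + rho ε k (n+2) * (((n : ℝ) + 3) / ((n : ℝ) + 2)) := by
    intro n
    have h1 : ((n : ℝ) + 1) ≠ 0 := by positivity
    have h2 : ((n : ℝ) + 2) ≠ 0 := by positivity
    have h3 : ((n : ℝ) + 3) ≠ 0 := by positivity
    simp only [rho]
    push_cast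
    field_simp
    ring
  have hg : Tendsto (fun n : ℕ => (1 + bnd ε k n + bnd ε k (n+2)) / (ε * ((n : ℝ) + 2)))
      atTop (nhds (2 * L)) := by
    simp only [hid]
    have t1 := aux0 ε hε
    have t2 := h.mul (ratio 1)
    have t3 := (h.comp (tendsto_add_atTop_nat 2)).mul (ratio 3)
    have hcomb := (t1.add t2).add t3
    simp only [Function.comp] at hcomb
    rw [show (2:ℝ) * L = 0 + L * 1 + L * 1 by ring]
    exact hcomb
  have h2L : (2 * L) ≠ 0 := by positivity
  have := hg.inv₀ h2L
  rw [← one_div] at this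
  exact Tendsto.congr (fun n => (key n).symm) this

lemma lemB (ε M : ℝ) (hε : 0 < ε) (hM : 0 ≤ M) (k : ℕ)
    (h : Tendsto (fun n => bnd ε k n) atTop (nhds M)) :
    Tendsto (fun n => rho ε (k+1) n) atTop (nhds (1 / (1 + 2*M))) := by
  rw [← Filter.tendsto_add_atTop_iff_nat 1]
  have hpos : ∀ n : ℕ, 0 < 1 + bnd ε k n + bnd ε k (n+2) := by
    intro n
    have h1 := bnd_nonneg ε hε k n
    have h2 := bnd_nonneg ε hε k (n+2)
    linarith
  have key : ∀ n : ℕ, rho ε (k+1) (n+1) = 1 / (1 + bnd ε k n + bnd ε k (n+2)) := by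
    intro n
    have h2 : ε * ((n : ℝ) + 2) ≠ 0 := by positivity
    have hD : (1 + bnd ε k n + bnd ε k (n+2)) ≠ 0 := (hpos n).ne'
    have h3 : ε ≠ 0 := hε.ne'
    have h4 : ((n : ℝ) + 1 + 1) ≠ 0 := by positivity
    simp only [rho, bnd_succ_succ]
    push_cast
    field_simp
    ring
  have hden : Tendsto (fun n : ℕ => 1 + bnd ε k n + bnd ε k (n+2)) atTop (nhds (1 + 2*M)) := by
    have hc : Filter.Tendsto (fun _ : ℕ => (1:ℝ)) atTop (nhds 1) := tendsto_const_nhds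
    have hcomb := (hc.add h).add (h.comp (tendsto_add_atTop_nat 2))
    simp only [Function.comp] at hcomb
    rw [show (1:ℝ) + 2 * M = 1 + M + M by ring]
    exact hcomb
  have hne : (1 + 2*M) ≠ 0 := by positivity
  have := hden.inv₀ hne
  simp only [← one_div] at this
  exact Tendsto.congr (fun n => (key n).symm) this

lemma main_ind (ε : ℝ) (hε : 0 < ε) (j : ℕ) :
    Tendsto (fun n => rho ε (2*j+1) n) atTop (nhds (1 / ((j : ℝ) + 1))) := by
  induction j with
  | zero =>
    have : ∀ n : ℕ, rho ε 1 n = 1 := by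
      intro n
      cases n with
      | zero => simp [rho, bnd, Tmap, hε.ne']
      | succ m =>
        simp only [rho, bnd, Tmap]
        push_cast
        rw [add_zero, add_zero, div_one]
        field_simp
        ring
    simp only [this]
    simp only [Nat.cast_zero, zero_add, div_one]
    exact tendsto_const_nhds
  | succ j ih =>
    have hj : (0:ℝ) < 1 / ((j : ℝ) + 1) := by positivity
    have hA := lemA ε (1 / ((j : ℝ) + 1)) hε hj (2*j+1) ih
    have hval : 1 / (2 * (1 / ((j : ℝ) + 1))) = ((j : ℝ) + 1) / 2 := by
      field_simp
    rw [hval] at hA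
    have hB := lemB ε (((j : ℝ) + 1) / 2) hε (by positivity) (2*j+2) hA
    have hval2 : 1 / (1 + 2 * (((j : ℝ) + 1) / 2)) = 1 / ((j : ℝ) + 1 + 1) := by
      field_simp
      ring
    rw [hval2] at hB
    have : 2*(j+1)+1 = 2*j+2+1 := by ring
    rw [this]
    convert hB using 2
    push_cast
    ring

/-- Asymptotics in `n`: `ρ_n^{(2j)} → 1/(j+1)` and `2ε(n+1)ρ_n^{(2j+1)} → j+1`
(equivalently `b_n^{(2j+1)} → (j+1)/2`) as `n → ∞`. -/
theorem statement5 (ε : ℝ) (hε : 0 < ε) (j : ℕ) :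
    Filter.Tendsto (fun n : ℕ => rho ε (2*j+1) n) Filter.atTop (nhds (1 / ((j : ℝ) + 1))) ∧
    Filter.Tendsto (fun n : ℕ => 2 * ε * ((n : ℝ) + 1) * rho ε (2*j+2) n)
      Filter.atTop (nhds ((j : ℝ) + 1)) ∧
    Filter.Tendsto (fun n : ℕ => bnd ε (2*j+2) n) Filter.atTop (nhds (((j : ℝ) + 1) / 2)) := by
  have h1 := main_ind ε hε j
  have hj : (0:ℝ) < 1 / ((j : ℝ) + 1) := by positivity
  have hA := lemA ε (1 / ((j : ℝ) + 1)) hε hj (2*j+1) h1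
  have hval : 1 / (2 * (1 / ((j : ℝ) + 1))) = ((j : ℝ) + 1) / 2 := by
    field_simp
  rw [hval] at hA
  refine ⟨h1, ?_, hA⟩
  have heq : ∀ n : ℕ, 2 * ε * ((n : ℝ) + 1) * rho ε (2*j+2) n = 2 * bnd ε (2*j+2) n := by
    intro n
    have : ε * ((n : ℝ) + 1) ≠ 0 := by positivity
    simp only [rho]
    field_simp
  simp only [heq]
  have := hA.const_mul 2
  convert this using 2
  ring
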